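/- Let Ω ⊆ ℝ² be a compact set and P_1, …, P_ρ ⊆ ℝ² nonempty compact sets whose topological frontiers are Lebesgue-negligible. Let u_1, …, u_ρ : ℝ² × ℝ² → ℝ be continuous functions, a_1, …, a_ρ ∈ ℝ, and D, B : ℝ² → ℝ nonnegative integrable functions. Assume that for every Q = (q_1, …, q_ρ) ∈ Γ and all i ≠ j the set {q ∈ Ω : a_i + u_i(q, q_i) = a_j + u_j(q, q_j)} is Lebesgue-negligible. Let I_1, …, I_ρ, C_1, …, C_ρ, L : ℝ → ℝ be continuous functions. Then the function F(Q) = ∑_{i=1}^ρ [ I_i(∫_{q_i + P_i} B(q) dq) + C_i(∫_{Â_i(Q)} D(q) dq) ] + L(∫_{(q_1 + P_1) ∪ … ∪ (q_ρ + P_ρ)} D(q) dq) is continuous on Γ. -/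
import Mathlib

open Set MeasureTheory Filter Topology

abbrev E2 := EuclideanSpace ℝ (Fin 2)

lemma mem_translate {v x : E2} {s : Set E2} : x ∈ (fun p => v + p) '' s ↔ x - v ∈ s := by
  constructor
  · rintro ⟨p, hp, rfl⟩; simpa using hp
  · intro h; exact ⟨x - v, h, by module⟩

lemma translate_eq (v : E2) (s : Set E2) :
    (fun p => v + p) '' s = (Homeomorph.addLeft v) '' s := rfl

lemma interior_translate (v : E2) (s : Set E2) :
    interior ((fun p => v + p) '' s) = (fun p => v + p) '' interior s := by
  rw [translate_eq, translate_eq, Homeomorph.image_interior]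

lemma frontier_translate (v : E2) (s : Set E2) :
    frontier ((fun p => v + p) '' s) = (fun p => v + p) '' frontier s := by
  rw [translate_eq, translate_eq, Homeomorph.image_frontier]

lemma volume_translate (v : E2) (s : Set E2) :
    volume ((fun p => v + p) '' s) = volume s := by
  rw [Set.image_add_left, measure_preimage_add]

/-- If `x` avoids the translated frontier, then membership of `x` in the translate
(and in its interior) is locally constant as the translation vector varies. -/
lemma eventually_mem_iff {s : Set E2} (hs : IsClosed s) {q x : E2}
    (hx : x - q ∉ frontier s) :
    ∀ᶠ v in 𝓝 q, ((x - v ∈ s ↔ x - q ∈ s) ∧ (x - v ∈ interior s ↔ x - q ∈ interior s)) := by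
  have hcont : Continuous fun v : E2 => x - v := continuous_const.sub continuous_id
  by_cases hin : x - q ∈ interior s
  · have : ∀ᶠ v in 𝓝 q, x - v ∈ interior s :=
      hcont.continuousAt.eventually_mem (isOpen_interior.mem_nhds hin)
    exact this.mono fun v hv => ⟨by simp [interior_subset hv, interior_subset hin],
      by simp [hv, hin]⟩
  · have hout : x - q ∉ s := fun hmem => hx ⟨subset_closure hmem, hin⟩
    have : ∀ᶠ v in 𝓝 q, x - v ∈ sᶜ :=
      hcont.continuousAt.eventually_mem (hs.isOpen_compl.mem_nhds hout)
    refine this.mono fun v hv => ⟨iff_of_false hv hout,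
      iff_of_false (fun h => hv (interior_subset h)) hin⟩

lemma tendsto_setIntegral_of_eventually_mem_iff {f : E2 → ℝ} (hf : Integrable f)
    {ι : Type*} {l : Filter ι} [l.IsCountablyGenerated]
    {S : ι → Set E2} {S0 : Set E2}
    (hmeas : ∀ᶠ n in l, MeasurableSet (S n)) (hS0 : MeasurableSet S0)
    (hlim : ∀ᵐ x, ∀ᶠ n in l, (x ∈ S n ↔ x ∈ S0)) :
    Tendsto (fun n => ∫ q in S n, f q) l (𝓝 (∫ q in S0, f q)) := by
  have key : Tendsto (fun n => ∫ q, (S n).indicator f q) l (𝓝 (∫ q, S0.indicator f q)) := by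
    refine tendsto_integral_filter_of_dominated_convergence (fun x => ‖f x‖)
      (hmeas.mono fun n hn => hf.aestronglyMeasurable.indicator hn)
      (Eventually.of_forall fun n => ae_of_all _ fun x => norm_indicator_le_norm_self f x)
      hf.norm ?_
    refine hlim.mono fun x hx => ?_
    refine Tendsto.congr' ?_ tendsto_const_nhds
    refine hx.mono fun n hn => ?_
    by_cases h0 : x ∈ S0
    · simp only [Set.indicator_of_mem h0, Set.indicator_of_mem (hn.2 h0)]
    · simp only [Set.indicator_of_notMem h0, Set.indicator_of_notMem (fun h => h0 (hn.1 h))]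
  rw [← integral_indicator hS0]
  exact key.congr' (hmeas.mono fun n hn => (integral_indicator hn))

/-- continuity on `Γ` of the upper-level objective
`F(Q) = ∑ i [I_i(∫_{q_i+P_i} B) + C_i(∫_{Â_i(Q)} D)] + L(∫_{⋃ i (q_i+P_i)} D)`
of the bilevel location-allocation problem BL. -/
theorem bilevel_objective_continuousOn
    (ρ : ℕ) (Ω : Set (EuclideanSpace ℝ (Fin 2))) (hΩ : IsCompact Ω)
    (P : Fin ρ → Set (EuclideanSpace ℝ (Fin 2)))
    (hPc : ∀ i, IsCompact (P i)) (hPne : ∀ i, (P i).Nonempty)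
    (hPfr : ∀ i, volume (frontier (P i)) = 0)
    (u : Fin ρ → EuclideanSpace ℝ (Fin 2) × EuclideanSpace ℝ (Fin 2) → ℝ)
    (hu : ∀ i, Continuous (u i))
    (a : Fin ρ → ℝ)
    (D B : EuclideanSpace ℝ (Fin 2) → ℝ)
    (hD0 : ∀ q, 0 ≤ D q) (hD : Integrable D)
    (hB0 : ∀ q, 0 ≤ B q) (hB : Integrable B)
    (Γ : Set (Fin ρ → EuclideanSpace ℝ (Fin 2)))
    (hΓ : Γ = {Q | (∀ i, (fun p => Q i + p) '' P i ⊆ Ω) ∧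
      ∀ i j, i ≠ j →
        interior ((fun p => Q i + p) '' P i) ∩
          interior ((fun p => Q j + p) '' P j) = ∅})
    (hties : ∀ Q ∈ Γ, ∀ i j, i ≠ j →
      volume {q ∈ Ω | a i + u i (q, Q i) = a j + u j (q, Q j)} = 0)
    (Ahat : Fin ρ → (Fin ρ → EuclideanSpace ℝ (Fin 2)) →
      Set (EuclideanSpace ℝ (Fin 2)))
    (hAhat : ∀ i Q, Ahat i Q =
      {q ∈ Ω \ ⋃ j, interior ((fun p => Q j + p) '' P j) |
        ∀ j, j ≠ i → a i + u i (q, Q i) < a j + u j (q, Q j)})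
    (I C : Fin ρ → ℝ → ℝ) (L : ℝ → ℝ)
    (hI : ∀ i, Continuous (I i)) (hC : ∀ i, Continuous (C i)) (hL : Continuous L)
    (F : (Fin ρ → EuclideanSpace ℝ (Fin 2)) → ℝ)
    (hF : ∀ Q, F Q =
      (∑ i, (I i (∫ q in (fun p => Q i + p) '' P i, B q) +
             C i (∫ q in Ahat i Q, D q))) +
      L (∫ q in ⋃ i, (fun p => Q i + p) '' P i, D q)) :
    ContinuousOn F Γ := by
  -- measurability of translated sets
  have hTmeas : ∀ (i : Fin ρ) (Q' : Fin ρ → E2),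
      MeasurableSet ((fun p => Q' i + p) '' P i) := fun i Q' =>
    ((hPc i).image (continuous_add_left (Q' i))).isClosed.measurableSet
  -- measurability of best-reply cells
  have hAmeas : ∀ (i : Fin ρ) (Q' : Fin ρ → E2), MeasurableSet (Ahat i Q') := by
    intro i Q'
    rw [hAhat]
    have heq : {q ∈ Ω \ ⋃ j, interior ((fun p => Q' j + p) '' P j) |
        ∀ j, j ≠ i → a i + u i (q, Q' i) < a j + u j (q, Q' j)} =
        (Ω \ ⋃ j, interior ((fun p => Q' j + p) '' P j)) ∩
        ⋂ j, ⋂ (_ : j ≠ i), {q | a i + u i (q, Q' i) < a j + u j (q, Q' j)} := by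
      ext q
      simp only [Set.mem_sep_iff, Set.mem_inter_iff, Set.mem_iInter, Set.mem_setOf_eq]
    rw [heq]
    refine ((hΩ.isClosed.measurableSet.diff
        (MeasurableSet.iUnion fun j => isOpen_interior.measurableSet)).inter
      (MeasurableSet.iInter fun j => MeasurableSet.iInter fun _ => ?_))
    exact (isOpen_lt
      (continuous_const.add ((hu i).comp (continuous_id.prodMk continuous_const)))
      (continuous_const.add ((hu j).comp (continuous_id.prodMk continuous_const)))).measurableSet
  intro Q hQ
  apply ContinuousAt.continuousWithinAt
  have hcoord : ∀ i : Fin ρ, Tendsto (fun Q' : Fin ρ → E2 => Q' i) (𝓝 Q) (𝓝 (Q i)) :=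
    fun i => (continuous_apply i).tendsto Q
  -- a.e. avoidance of translated frontiers
  have haefr : ∀ᵐ x, ∀ j : Fin ρ, x - Q j ∉ frontier (P j) := by
    rw [ae_all_iff]
    intro j
    have h0 : volume ((fun p => Q j + p) '' frontier (P j)) = 0 := by
      rw [volume_translate]; exact hPfr j
    exact (measure_eq_zero_iff_ae_notMem.1 h0).mono fun x hx h => hx (mem_translate.2 h)
  -- the basic eventual-iff for translate membership
  have hev : ∀ (j : Fin ρ) (x : E2), x - Q j ∉ frontier (P j) →
      ∀ᶠ Q' : Fin ρ → E2 in 𝓝 Q,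
        ((x ∈ (fun p => Q' j + p) '' P j ↔ x ∈ (fun p => Q j + p) '' P j) ∧
         (x ∈ interior ((fun p => Q' j + p) '' P j) ↔
          x ∈ interior ((fun p => Q j + p) '' P j))) := by
    intro j x hx
    refine ((hcoord j).eventually (eventually_mem_iff (hPc j).isClosed hx)).mono
      fun Q' h => ⟨?_, ?_⟩
    · rw [mem_translate, mem_translate]; exact h.1
    · rw [interior_translate, interior_translate, mem_translate, mem_translate]; exact h.2
  -- first component: integrals of B over translates
  have tendB : ∀ i : Fin ρ,
      Tendsto (fun Q' : Fin ρ → E2 => ∫ q in (fun p => Q' i + p) '' P i, B q) (𝓝 Q)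
        (𝓝 (∫ q in (fun p => Q i + p) '' P i, B q)) := by
    intro i
    refine tendsto_setIntegral_of_eventually_mem_iff hB
      (Eventually.of_forall fun Q' => hTmeas i Q') (hTmeas i Q) ?_
    exact haefr.mono fun x hx => (hev i x (hx i)).mono fun Q' h => h.1
  -- union component
  have tendU : Tendsto (fun Q' : Fin ρ → E2 =>
        ∫ q in ⋃ i, (fun p => Q' i + p) '' P i, D q) (𝓝 Q)
        (𝓝 (∫ q in ⋃ i, (fun p => Q i + p) '' P i, D q)) := by
    refine tendsto_setIntegral_of_eventually_mem_iff hD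
      (Eventually.of_forall fun Q' => MeasurableSet.iUnion fun i => hTmeas i Q')
      (MeasurableSet.iUnion fun i => hTmeas i Q) ?_
    refine haefr.mono fun x hx => ?_
    have hall : ∀ᶠ Q' : Fin ρ → E2 in 𝓝 Q, ∀ j : Fin ρ,
        (x ∈ (fun p => Q' j + p) '' P j ↔ x ∈ (fun p => Q j + p) '' P j) :=
      eventually_all.2 fun j => (hev j x (hx j)).mono fun Q' h => h.1
    refine hall.mono fun Q' h => ?_
    simp only [Set.mem_iUnion]
    exact exists_congr h
  -- best-reply cell component
  have tendA : ∀ i : Fin ρ,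
      Tendsto (fun Q' : Fin ρ → E2 => ∫ q in Ahat i Q', D q) (𝓝 Q)
        (𝓝 (∫ q in Ahat i Q, D q)) := by
    intro i
    refine tendsto_setIntegral_of_eventually_mem_iff hD
      (Eventually.of_forall fun Q' => hAmeas i Q') (hAmeas i Q) ?_
    have haetie : ∀ᵐ x, ∀ j : Fin ρ, j ≠ i →
        ¬(x ∈ Ω ∧ a i + u i (x, Q i) = a j + u j (x, Q j)) := by
      rw [ae_all_iff]
      intro j
      by_cases hj : j = i
      · exact ae_of_all _ fun x h => absurd hj h
      · have h0 := hties Q hQ i j (fun h => hj h.symm)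
        refine (measure_eq_zero_iff_ae_notMem.1 h0).mono fun x hx _ h => hx ?_
        exact ⟨h.1, h.2⟩
    refine (haefr.and haetie).mono fun x hx => ?_
    obtain ⟨hxfr, hxtie⟩ := hx
    by_cases hxΩ : x ∈ Ω
    · -- interior memberships eventually agree
      have hint : ∀ᶠ Q' : Fin ρ → E2 in 𝓝 Q, ∀ j : Fin ρ,
          (x ∈ interior ((fun p => Q' j + p) '' P j) ↔
           x ∈ interior ((fun p => Q j + p) '' P j)) :=
        eventually_all.2 fun j => (hev j x (hxfr j)).mono fun Q' h => h.2
      -- strict inequalities eventually agree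
      have hineq : ∀ᶠ Q' : Fin ρ → E2 in 𝓝 Q, ∀ j : Fin ρ, j ≠ i →
          (a i + u i (x, Q' i) < a j + u j (x, Q' j) ↔
           a i + u i (x, Q i) < a j + u j (x, Q j)) := by
        refine eventually_all.2 fun j => ?_
        by_cases hj : j = i
        · exact Eventually.of_forall fun Q' h => absurd hj h
        · have hji : j ≠ i := hj
          have hne : a i + u i (x, Q i) ≠ a j + u j (x, Q j) :=
            fun h => hxtie j hji ⟨hxΩ, h⟩
          have hfi : Tendsto (fun Q' : Fin ρ → E2 => a i + u i (x, Q' i)) (𝓝 Q)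
              (𝓝 (a i + u i (x, Q i))) :=
            tendsto_const_nhds.add (((hu i).tendsto _).comp
              (tendsto_const_nhds.prodMk_nhds (hcoord i)))
          have hfj : Tendsto (fun Q' : Fin ρ → E2 => a j + u j (x, Q' j)) (𝓝 Q)
              (𝓝 (a j + u j (x, Q j))) :=
            tendsto_const_nhds.add (((hu j).tendsto _).comp
              (tendsto_const_nhds.prodMk_nhds (hcoord j)))
          rcases hne.lt_or_gt with h | h
          · exact (hfi.eventually_lt hfj h).mono fun Q' hlt _ => iff_of_true hlt h
          · exact (hfj.eventually_lt hfi h).mono fun Q' hlt _ =>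
              iff_of_false (asymm hlt) (asymm h)
      filter_upwards [hint, hineq] with Q' h1 h2
      rw [hAhat, hAhat]
      simp only [Set.mem_sep_iff, Set.mem_diff, Set.mem_iUnion, not_exists]
      exact and_congr (and_congr Iff.rfl (forall_congr' fun j => not_congr (h1 j)))
        (forall_congr' fun j => imp_congr_right (h2 j))
    · refine Eventually.of_forall fun Q' => iff_of_false ?_ ?_ <;>
        · rw [hAhat]; exact fun h => hxΩ h.1.1
  -- assemble
  rw [show F = fun Q' => (∑ i, (I i (∫ q in (fun p => Q' i + p) '' P i, B q) +
             C i (∫ q in Ahat i Q', D q))) +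
      L (∫ q in ⋃ i, (fun p => Q' i + p) '' P i, D q) from funext hF]
  exact Tendsto.add
    (tendsto_finset_sum _ fun i _ => Tendsto.add
      (((hI i).tendsto _).comp (tendB i)) (((hC i).tendsto _).comp (tendA i)))
    ((hL.tendsto _).comp tendU)
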